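/- Let m be a monad on c ⥤ Type whose underlying endofunctor is familial with positions m(1) and arities m[M], and suppose the unit η of m is cartesian (every naturality square of η is a pullback). For each object C of c, let η(C) ∈ m(1)(C) be the element picked out by the unit component at the terminal copresheaf (the image under η_⊤(C) : ⊤(C) → m(⊤)(C) ≅ m(1)(C) of the unique element). Then the arity m[η(C)] is isomorphic, as a c-copresheaf, to the representable copresheaf c(C, −). Moreover, every component of η is a monomorphism, and consequently the free algebra functor c-Set ⥤ m-Alg is faithful. -/

import Mathlib

namespace Fam
open CategoryTheory Opposite Limits
private lemma sigmaExt {α : Type} {β : α → Type} {a a' : α} {b : β a} {b' : β a'}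
    (h : a = a') (h' : HEq b b') : (⟨a, b⟩ : Σ x, β x) = ⟨a', b'⟩ := by
  subst h; cases h'; rfl
variable {c d : Type} [SmallCategory c] [SmallCategory d]
def elHom (pos : c ⥤ Type) {C C' : c} (f : C ⟶ C') (I : pos.obj C) :
    pos.elementsMk C I ⟶ pos.elementsMk C' (pos.map f I) :=
  CategoryOfElements.homMk _ _ f rfl
lemma eqToHom_val {pos : c ⥤ Type} {x y : pos.Elements} (E : x = y) :
    (eqToHom E).val = eqToHom (congrArg Sigma.fst E) := by
  subst E; simp
@[simps]
def famApply (pos : c ⥤ Type) (ar : pos.Elementsᵒᵖ ⥤ d ⥤ Type) :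
    (d ⥤ Type) ⥤ c ⥤ Type where
  obj X :=
    { obj := fun C => Σ I : pos.obj C, ar.obj (op (pos.elementsMk C I)) ⟶ X
      map := fun {C C'} f => TypeCat.ofHom fun x => ⟨pos.map f x.1, ar.map (elHom pos f x.1).op ≫ x.2⟩
      map_id := by
        intro C
        ext x : 3
        obtain ⟨I, g⟩ := x
        have h : pos.map (𝟙 C) I = I := by simp
        have hE : pos.elementsMk C I = pos.elementsMk C (pos.map (𝟙 C) I) := by rw [h]
        have he : elHom pos (𝟙 C) I = eqToHom hE := by
          apply CategoryOfElements.ext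
          rw [eqToHom_val]
          simp [elHom]
        dsimp
        refine sigmaExt h ?_
        rw [he]
        simp [eqToHom_op, eqToHom_map]
      map_comp := by
        intro C C' C'' f g
        ext x : 3
        obtain ⟨I, u⟩ := x
        have h : pos.map (f ≫ g) I = pos.map g (pos.map f I) := by simp
        have hE : pos.elementsMk C'' (pos.map (f ≫ g) I)
            = pos.elementsMk C'' (pos.map g (pos.map f I)) := by rw [h]
        have hcomp : elHom pos f I ≫ elHom pos g (pos.map f I)
            = elHom pos (f ≫ g) I ≫ eqToHom hE := by
          apply CategoryOfElements.ext
          rw [CategoryOfElements.comp_val, CategoryOfElements.comp_val, eqToHom_val]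
          simp [elHom]
        dsimp
        refine sigmaExt h ?_
        rw [← Category.assoc, ← ar.map_comp, ← op_comp, hcomp, op_comp, ar.map_comp,
          Category.assoc]
        simp [eqToHom_op, eqToHom_map] }
  map {X Y} t :=
    { app := fun C => TypeCat.ofHom fun x => ⟨x.1, x.2 ≫ t⟩
      naturality := by
        intro C C' f
        ext x : 3
        dsimp
        rw [Category.assoc] }
  map_id := by
    intro X
    apply NatTrans.ext
    ext C x : 4
    dsimp
    rw [Category.comp_id]
  map_comp := by
    intro X Y Z s t
    apply NatTrans.ext
    ext C x : 4
    dsimp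
    rw [Category.assoc]

/-- The unit exhibiting `famApply pos (ar ⋙ G)` as the right coclosure `⌈F/G⌉`,
i.e. the left Kan extension of the familial functor `F = famApply pos ar` along `G`. -/
def coclosureUnit {e : Type} [SmallCategory e] (pos : c ⥤ Type)
    (ar : pos.Elementsᵒᵖ ⥤ e ⥤ Type) (G : (e ⥤ Type) ⥤ d ⥤ Type) :
    famApply pos ar ⟶ G ⋙ famApply pos (ar ⋙ G) where
  app X :=
    { app := fun C => TypeCat.ofHom fun x => ⟨x.1, G.map x.2⟩
      naturality := by
        intro C C' f
        ext x : 3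
        show (⟨pos.map f x.1, G.map (ar.map (elHom pos f x.1).op ≫ x.2)⟩ :
            Σ I : pos.obj C', (ar ⋙ G).obj (op (pos.elementsMk C' I)) ⟶ G.obj X)
          = ⟨pos.map f x.1, G.map (ar.map (elHom pos f x.1).op) ≫ G.map x.2⟩
        rw [G.map_comp] }
  naturality := by
    intro X Y t
    apply NatTrans.ext
    ext C x
    show (⟨x.1, G.map (x.2 ≫ t)⟩ :
        Σ I : pos.obj C, (ar ⋙ G).obj (op (pos.elementsMk C I)) ⟶ G.obj Y)
      = ⟨x.1, G.map x.2 ≫ G.map t⟩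
    rw [G.map_comp]

section Statement12

variable {c : Type} [SmallCategory c]
  (m : Monad (c ⥤ Type)) {posm : c ⥤ Type} (arm : posm.Elementsᵒᵖ ⥤ c ⥤ Type)

/-- The terminal copresheaf on `c`. -/
def termPSh : c ⥤ Type := (Functor.const c).obj PUnit

variable (em : famApply posm arm ≅ (m : (c ⥤ Type) ⥤ c ⥤ Type))

/-- The unit operation `η(C) ∈ m(1)(C)`: the image of the unique element under the unit
component of `m` at the terminal copresheaf (using `m(⊤) ≅ m(1)`). -/
def unitOp (C : c) : posm.obj C :=
  ((em.inv.app (termPSh)).app C ((m.η.app (termPSh)).app C PUnit.unit)).1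


/-- The terminal map. -/
private def toTerm (X : c ⥤ Type) : X ⟶ termPSh where
  app := fun _ => TypeCat.ofHom fun _ => PUnit.unit
  naturality := by intros; ext _; rfl

private lemma hom_to_term_eq {X : c ⥤ Type} (a b : X ⟶ termPSh) : a = b := by
  apply NatTrans.ext; ext D x : 4
  exact @Subsingleton.elim PUnit _ _ _

private def sndTrans {C : c} {X : c ⥤ Type} {I₀ : posm.obj C}
    (p : Σ I : posm.obj C, arm.obj (op (posm.elementsMk C I)) ⟶ X)
    (h : p.1 = I₀) : arm.obj (op (posm.elementsMk C I₀)) ⟶ X :=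
  eqToHom (congrArg (fun I => arm.obj (op (posm.elementsMk C I))) h.symm) ≫ p.2

private lemma sigma_eq_sndTrans {C : c} {X : c ⥤ Type} {I₀ : posm.obj C}
    (p : Σ I : posm.obj C, arm.obj (op (posm.elementsMk C I)) ⟶ X)
    (h : p.1 = I₀) : p = ⟨I₀, sndTrans arm p h⟩ := by
  obtain ⟨I, g⟩ := p
  dsimp at h
  subst h
  simp [sndTrans]

private lemma eta_pointwise_injective
    (hUnitCartesian : ∀ {X Y : c ⥤ Type} (f : X ⟶ Y),
      IsPullback f (m.η.app X) (m.η.app Y) ((m : (c ⥤ Type) ⥤ c ⥤ Type).map f))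
    (X : c ⥤ Type) (C : c) : Function.Injective ((m.η.app X).app C) := by
  intro x x' h
  have hP := (hUnitCartesian (toTerm X)).map ((evaluation c Type).obj C)
  have h0 : TypeCat.ofHom (fun _ : PUnit => x) ≫ ((evaluation c Type).obj C).map (toTerm X)
      = TypeCat.ofHom (fun _ : PUnit => x') ≫ ((evaluation c Type).obj C).map (toTerm X) := by
    ext _; rfl
  have h1 : TypeCat.ofHom (fun _ : PUnit => x) ≫ ((evaluation c Type).obj C).map (m.η.app X)
      = TypeCat.ofHom (fun _ : PUnit => x') ≫ ((evaluation c Type).obj C).map (m.η.app X) := by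
    ext _; exact h
  have := PullbackCone.IsLimit.hom_ext hP.isLimit h0 h1
  exact types_congr_hom this PUnit.unit

/-- The corepresentability of evaluation at `C` by the arity of the unit operation. -/
private noncomputable def unitCorep
    (hUnitCartesian : ∀ {X Y : c ⥤ Type} (f : X ⟶ Y),
      IsPullback f (m.η.app X) (m.η.app Y) ((m : (c ⥤ Type) ⥤ c ⥤ Type).map f))
    (C : c) :
    ((evaluation c Type).obj C).CorepresentableBy
      (arm.obj (op (posm.elementsMk C (unitOp m arm em C)))) := by
  set ηC := unitOp m arm em C with hηC
  -- elementwise components of the familial isomorphism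
  let Φ : ∀ X : c ⥤ Type, ((m : (c ⥤ Type) ⥤ c ⥤ Type).obj X).obj C →
      Σ I : posm.obj C, arm.obj (op (posm.elementsMk C I)) ⟶ X :=
    fun X z => (em.inv.app X).app C z
  let Ψ : ∀ X : c ⥤ Type, (Σ I : posm.obj C, arm.obj (op (posm.elementsMk C I)) ⟶ X) →
      ((m : (c ⥤ Type) ⥤ c ⥤ Type).obj X).obj C :=
    fun X p => (em.hom.app X).app C p
  have PhiPsi : ∀ (X : c ⥤ Type) (p), Φ X (Ψ X p) = p := by
    intro X p
    exact types_congr_hom (NatTrans.congr_app (NatTrans.congr_app em.hom_inv_id X) C) p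
  have PsiPhi : ∀ (X : c ⥤ Type) (z), Ψ X (Φ X z) = z := by
    intro X z
    exact types_congr_hom (NatTrans.congr_app (NatTrans.congr_app em.inv_hom_id X) C) z
  have Phi_nat : ∀ {X Y : c ⥤ Type} (t : X ⟶ Y) (z),
      Φ Y (((m : (c ⥤ Type) ⥤ c ⥤ Type).map t).app C z) = ⟨(Φ X z).1, (Φ X z).2 ≫ t⟩ := by
    intro X Y t z
    exact types_congr_hom (NatTrans.congr_app (em.inv.naturality t) C) z
  have Psi_nat : ∀ {X Y : c ⥤ Type} (t : X ⟶ Y)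
      (p : Σ I : posm.obj C, arm.obj (op (posm.elementsMk C I)) ⟶ X),
      Ψ Y ⟨p.1, p.2 ≫ t⟩ = ((m : (c ⥤ Type) ⥤ c ⥤ Type).map t).app C (Ψ X p) := by
    intro X Y t p
    exact types_congr_hom (NatTrans.congr_app (em.hom.naturality t) C) p
  have eta_nat : ∀ {X Y : c ⥤ Type} (t : X ⟶ Y) (x : X.obj C),
      ((m : (c ⥤ Type) ⥤ c ⥤ Type).map t).app C ((m.η.app X).app C x)
        = (m.η.app Y).app C (t.app C x) := by
    intro X Y t x
    exact (types_congr_hom (NatTrans.congr_app (m.η.naturality t) C) x).symm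
  have hinj := eta_pointwise_injective m hUnitCartesian
  -- the first component of `Φ X (η x)` is the unit operation
  have hfst : ∀ (X : c ⥤ Type) (x : X.obj C), (Φ X ((m.η.app X).app C x)).1 = ηC := by
    intro X x
    have h1 := Phi_nat (toTerm X) ((m.η.app X).app C x)
    have h2 : ((m : (c ⥤ Type) ⥤ c ⥤ Type).map (toTerm X)).app C ((m.η.app X).app C x)
        = (m.η.app termPSh).app C PUnit.unit := eta_nat (toTerm X) x
    rw [h2] at h1
    exact (congrArg Sigma.fst h1).symm
  -- `fromHom`: pullback lift
  have key : ∀ (X : c ⥤ Type) (g : arm.obj (op (posm.elementsMk C ηC)) ⟶ X),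
      ∃ x : X.obj C, (m.η.app X).app C x = Ψ X ⟨ηC, g⟩ := by
    intro X g
    have hz : ((m : (c ⥤ Type) ⥤ c ⥤ Type).map (toTerm X)).app C (Ψ X ⟨ηC, g⟩)
        = (m.η.app termPSh).app C PUnit.unit := by
      have h1 := Phi_nat (toTerm X) (Ψ X ⟨ηC, g⟩)
      rw [PhiPsi] at h1
      have h2 : (⟨ηC, g ≫ toTerm X⟩ :
            Σ I : posm.obj C, arm.obj (op (posm.elementsMk C I)) ⟶ termPSh)
          = Φ termPSh ((m.η.app termPSh).app C PUnit.unit) := by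
        refine sigmaExt rfl (heq_of_eq ?_)
        exact hom_to_term_eq _ _
      have h3 : Φ X (Ψ X ⟨ηC, g⟩) = ⟨ηC, g⟩ := PhiPsi X _
      calc ((m : (c ⥤ Type) ⥤ c ⥤ Type).map (toTerm X)).app C (Ψ X ⟨ηC, g⟩)
          = Ψ termPSh (Φ termPSh (((m : (c ⥤ Type) ⥤ c ⥤ Type).map (toTerm X)).app C
              (Ψ X ⟨ηC, g⟩))) := (PsiPhi _ _).symm
        _ = Ψ termPSh ⟨ηC, g ≫ toTerm X⟩ := by rw [h1]
        _ = Ψ termPSh (Φ termPSh ((m.η.app termPSh).app C PUnit.unit)) := by rw [h2]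
        _ = (m.η.app termPSh).app C PUnit.unit := PsiPhi _ _
    have hP := (hUnitCartesian (toTerm X)).map ((evaluation c Type).obj C)
    have w : TypeCat.ofHom (fun _ : PUnit => PUnit.unit) ≫ ((evaluation c Type).obj C).map
          (m.η.app termPSh)
        = TypeCat.ofHom (fun _ : PUnit => Ψ X ⟨ηC, g⟩) ≫ ((evaluation c Type).obj C).map
          ((m : (c ⥤ Type) ⥤ c ⥤ Type).map (toTerm X)) := by
      ext _; exact hz.symm
    obtain ⟨l, -, hl⟩ := PullbackCone.IsLimit.lift' hP.isLimit _ _ w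
    exact ⟨l PUnit.unit, types_congr_hom hl PUnit.unit⟩
  choose fromHom hfromHom using key
  refine
    { homEquiv := fun {X} =>
        { toFun := fun g => fromHom X g
          invFun := fun x => sndTrans arm (Φ X ((m.η.app X).app C x)) (hfst X x)
          left_inv := ?_
          right_inv := ?_ }
      homEquiv_comp := ?_ }
  · intro g
    rename_i X
    dsimp only
    have h1 : Φ X ((m.η.app X).app C (fromHom X g)) = ⟨ηC, g⟩ := by
      rw [hfromHom]; exact PhiPsi X _
    have h2 := sigma_eq_sndTrans arm (Φ X ((m.η.app X).app C (fromHom X g)))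
      (hfst X (fromHom X g))
    have h4 := h1.symm.trans h2
    injection h4 with h5 h6
    exact h6.symm
  · intro x
    rename_i X
    dsimp only
    apply hinj X C
    rw [hfromHom]
    have h2 := sigma_eq_sndTrans arm (Φ X ((m.η.app X).app C x)) (hfst X x)
    calc Ψ X ⟨ηC, sndTrans arm (Φ X ((m.η.app X).app C x)) (hfst X x)⟩
        = Ψ X (Φ X ((m.η.app X).app C x)) := by rw [← h2]
      _ = (m.η.app X).app C x := PsiPhi X _
  · intro X Y t g
    apply hinj Y C
    show (m.η.app Y).app C (fromHom Y (g ≫ t)) = (m.η.app Y).app C (t.app C (fromHom X g))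
    rw [hfromHom]
    show Ψ Y ⟨ηC, g ≫ t⟩ = (m.η.app Y).app C (t.app C (fromHom X g))
    rw [← eta_nat t (fromHom X g), hfromHom]
    exact Psi_nat t ⟨ηC, g⟩

private def evalCorepCoyoneda (C : c) :
    ((evaluation c Type).obj C).CorepresentableBy (coyoneda.obj (op C)) where
  homEquiv := coyonedaEquiv
  homEquiv_comp g f := coyonedaEquiv_comp f g

/-- If `m` is a familial monad on `c ⥤ Type` whose unit is cartesian,
then the arity `m[η(C)]` of the unit operation at `C` is isomorphic to the representable
copresheaf `c(C, −)`; moreover every component of the unit is a monomorphism, and hence the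
free algebra functor `c-Set ⥤ m-Alg` is faithful. -/
theorem unit_arity_representable_of_cartesian_unit
    (hUnitCartesian : ∀ {X Y : c ⥤ Type} (f : X ⟶ Y),
      IsPullback f (m.η.app X) (m.η.app Y) ((m : (c ⥤ Type) ⥤ c ⥤ Type).map f)) :
    (∀ C : c,
      Nonempty (arm.obj (op (posm.elementsMk C (unitOp m arm em C))) ≅
        coyoneda.obj (op C))) ∧
    (∀ X : c ⥤ Type, Mono (m.η.app X)) ∧
    m.free.Faithful := by
  constructor
  · intro C
    have e1 := (unitCorep m arm em hUnitCartesian C).toIso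
    have e2 := (evalCorepCoyoneda (c := c) C).toIso
    exact ⟨((Coyoneda.fullyFaithful).preimageIso (e1 ≪≫ e2.symm)).unop.symm⟩
  constructor
  · intro X
    constructor
    intro Z a b hab
    have hP := hUnitCartesian (toTerm X)
    exact PullbackCone.IsLimit.hom_ext hP.isLimit (hom_to_term_eq _ _) hab
  · constructor
    intro X Y f g hfg
    have h1 : (m : (c ⥤ Type) ⥤ c ⥤ Type).map f = (m : (c ⥤ Type) ⥤ c ⥤ Type).map g :=
      congrArg Monad.Algebra.Hom.f hfg
    have hmono : Mono (m.η.app Y) := by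
      constructor
      intro Z a b hab
      have hP := hUnitCartesian (toTerm Y)
      exact PullbackCone.IsLimit.hom_ext hP.isLimit (hom_to_term_eq _ _) hab
    have h2 : f ≫ m.η.app Y = g ≫ m.η.app Y := by
      have hf := m.η.naturality f
      have hg := m.η.naturality g
      simp only [Functor.id_map] at hf hg
      rw [hf, hg, h1]
    exact (cancel_mono (m.η.app Y)).1 h2

end Statement12

end Fam
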